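/- There exists a universal constant C > 0 with the following property. For every ε ∈ (0, 1/2], every positive integer m, and every centered Gaussian random vector (Y_1, …, Y_m) on ℝ^m with positive semidefinite covariance matrix Σ satisfying Σ_ii ≤ ε² for every i ∈ {1,…,m} and Σ_{i=1}^m Σ_ii ≤ 1, one has E[max(0, max_{i∈[m]} Y_i)] ≤ C · ε · √(ln(1/ε)). -/

import Mathlib

open MeasureTheory ProbabilityTheory Real Set
open scoped NNReal ENNReal

lemma gauss_tail (v : ℝ≥0) (hv : v ≠ 0) {t : ℝ} (ht : 0 ≤ t) :
    gaussianReal 0 v (Set.Ioi t) ≤ ENNReal.ofReal (Real.exp (-t ^ 2 / (2 * v))) := by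
  have hv0 : (0:ℝ) < (v:ℝ) := by exact_mod_cast pos_iff_ne_zero.mpr hv
  have key : ∀ x ∈ Set.Ioi t, gaussianPDF 0 v x
      ≤ ENNReal.ofReal (Real.exp (-t ^ 2 / (2 * v))) * gaussianPDF t v x := by
    intro x hx
    have hx' : t < x := hx
    rw [gaussianPDF, gaussianPDF, ← ENNReal.ofReal_mul (Real.exp_nonneg _)]
    refine ENNReal.ofReal_le_ofReal ?_
    rw [gaussianPDFReal, gaussianPDFReal]
    have h1 : rexp (-(x - 0) ^ 2 / (2 * v))
        ≤ rexp (-t ^ 2 / (2 * v)) * rexp (-(x - t) ^ 2 / (2 * v)) := by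
      rw [← Real.exp_add, ← add_div]
      apply Real.exp_le_exp.mpr
      rw [div_le_div_iff_of_pos_right (by positivity)]
      nlinarith
    calc (√(2 * π * v))⁻¹ * rexp (-(x - 0) ^ 2 / (2 * v))
        ≤ (√(2 * π * v))⁻¹ * (rexp (-t ^ 2 / (2 * v)) * rexp (-(x - t) ^ 2 / (2 * v))) := by
          apply mul_le_mul_of_nonneg_left h1 (by positivity)
      _ = rexp (-t ^ 2 / (2 * v)) * ((√(2 * π * v))⁻¹ * rexp (-(x - t) ^ 2 / (2 * v))) := by ring
  calc gaussianReal 0 v (Set.Ioi t)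
      = ∫⁻ x in Set.Ioi t, gaussianPDF 0 v x := gaussianReal_apply 0 hv _
    _ ≤ ∫⁻ x in Set.Ioi t,
          ENNReal.ofReal (Real.exp (-t ^ 2 / (2 * v))) * gaussianPDF t v x :=
        setLIntegral_mono ((measurable_gaussianPDF t v).const_mul _) key
    _ ≤ ∫⁻ x, ENNReal.ofReal (Real.exp (-t ^ 2 / (2 * v))) * gaussianPDF t v x :=
        setLIntegral_le_lintegral _ _
    _ = ENNReal.ofReal (Real.exp (-t ^ 2 / (2 * v))) * ∫⁻ x, gaussianPDF t v x :=
        lintegral_const_mul _ (measurable_gaussianPDF t v)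
    _ = ENNReal.ofReal (Real.exp (-t ^ 2 / (2 * v))) := by
        rw [lintegral_gaussianPDF_eq_one t hv, mul_one]

lemma exp_ratio {ε w s : ℝ} (hε : 0 < ε) (hw0 : 0 < w) (hw : w ≤ ε ^ 2) (hs : 2 * ε ^ 2 ≤ s) :
    Real.exp (-s / (2 * w)) ≤ (w / ε ^ 2) * Real.exp (-s / (2 * ε ^ 2)) := by
  set u : ℝ := w / ε ^ 2 with hu
  have hu0 : 0 < u := by positivity
  have hu1 : u ≤ 1 := by rw [hu, div_le_one (by positivity)]; exact hw
  set r : ℝ := s / (2 * ε ^ 2) with hr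
  have hr1 : 1 ≤ r := by rw [hr, le_div_iff₀ (by positivity)]; linarith
  have key : Real.exp (1 - 1 / u) ≤ u := by
    have h1 : 1 / u ≤ Real.exp (1 / u - 1) := by
      have := Real.add_one_le_exp (1 / u - 1)
      linarith
    have h2 : Real.exp (1 - 1 / u) = (Real.exp (1 / u - 1))⁻¹ := by
      rw [← Real.exp_neg]; ring_nf
    rw [h2]
    rw [inv_le_comm₀ (Real.exp_pos _) hu0]
    rw [← one_div]
    exact h1
  have hwe : -s / (2 * w) = -(r / u) := by
    rw [hr, hu]; field_simp
  have hgoal : Real.exp (-(r / u)) ≤ u * Real.exp (-r) := by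
    have h3 : r - r / u ≤ 1 - 1 / u := by
      have : (r - 1) * (1 - 1 / u) ≤ 0 := by
        apply mul_nonpos_of_nonneg_of_nonpos (by linarith)
        have : 1 ≤ 1 / u := by rw [le_div_iff₀ hu0]; linarith
        linarith
      have hexp : (r - 1) * (1 - 1 / u) = r - r / u - 1 + 1 / u := by ring
      linarith
    calc Real.exp (-(r / u)) = Real.exp (r - r / u) * Real.exp (-r) := by
          rw [← Real.exp_add]; ring_nf
      _ ≤ Real.exp (1 - 1 / u) * Real.exp (-r) := by
          apply mul_le_mul_of_nonneg_right (Real.exp_le_exp.mpr h3) (Real.exp_nonneg _)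
      _ ≤ u * Real.exp (-r) := mul_le_mul_of_nonneg_right key (Real.exp_nonneg _)
  rw [hwe]
  calc Real.exp (-(r / u)) ≤ u * Real.exp (-r) := hgoal
    _ = (w / ε ^ 2) * Real.exp (-s / (2 * ε ^ 2)) := by rw [hu, hr]; ring_nf

/-- Lemma: the expected positive part of the max of low-variance centered Gaussians with
total variance at most 1 is `O(ε √(ln(1/ε)))`. A centered Gaussian random vector with
covariance matrix `S` is characterized by: every linear combination `∑ i, a i * Y i` is a
real Gaussian with mean `0` and variance `aᵀ S a`. -/
theorem expected_max_small_variance_bound :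
    ∃ C : ℝ, 0 < C ∧
      ∀ (ε : ℝ), 0 < ε → ε ≤ 1 / 2 →
      ∀ (m : ℕ), 0 < m →
      ∀ (Ω : Type) (_ : MeasurableSpace Ω) (P : Measure Ω), IsProbabilityMeasure P →
      ∀ (Y : Fin m → Ω → ℝ) (S : Matrix (Fin m) (Fin m) ℝ),
        S.PosSemidef →
        (∀ i, Measurable (Y i)) →
        (∀ a : Fin m → ℝ,
          Measure.map (fun ω => ∑ i, a i * Y i ω) P
            = gaussianReal 0 (Real.toNNReal (∑ i, ∑ j, a i * S i j * a j))) →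
        (∀ i, S i i ≤ ε ^ 2) →
        (∑ i, S i i) ≤ 1 →
        (∫ ω, max 0 (⨆ i, Y i ω) ∂P) ≤ C * ε * Real.sqrt (Real.log (1 / ε)) := by
  refine ⟨8, by norm_num, ?_⟩
  intro ε hε hεhalf m hm Ω mΩ P hP Y S hS hYmeas hmap hSdiag hStr
  haveI : IsProbabilityMeasure P := hP
  haveI : Nonempty (Fin m) := ⟨⟨0, hm⟩⟩
  set L := Real.log (1 / ε) with hLdef
  have hlog2 : Real.log 2 ≤ L := by
    apply Real.log_le_log (by norm_num)
    rw [le_one_div (by norm_num) hε]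
    linarith
  have hL0 : 0 < L := lt_of_lt_of_le (Real.log_pos one_lt_two) hlog2
  have hsqL : 0 < Real.sqrt L := Real.sqrt_pos.mpr hL0
  set t₀ := 3 * ε * Real.sqrt L with ht₀def
  have ht₀0 : 0 < t₀ := by positivity
  have hRHS : (0:ℝ) ≤ 8 * ε * Real.sqrt L := by positivity
  by_cases hint : Integrable (fun ω => max 0 (⨆ i, Y i ω)) P
  swap
  · rw [integral_undef hint]; positivity
  have hSnn : ∀ i, (0:ℝ) ≤ S i i := by
    intro i
    have h := hS.diag_nonneg (i := i)
    simpa using h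
  have hmarg : ∀ i, Measure.map (Y i) P = gaussianReal 0 (Real.toNNReal (S i i)) := by
    intro i
    have h := hmap (fun j => if j = i then 1 else 0)
    have h1 : (fun ω => ∑ j, (if j = i then 1 else 0) * Y j ω) = Y i := by
      funext ω
      simp [ite_mul]
    have h2 : (∑ j, ∑ k, (if j = i then 1 else 0) * S j k * (if k = i then 1 else 0)) = S i i := by
      simp [ite_mul, mul_ite]
    rw [h1, h2] at h
    exact h
  have hsq9 : t₀ ^ 2 = 9 * ε ^ 2 * L := by
    rw [ht₀def, mul_pow, mul_pow, Real.sq_sqrt hL0.le]; ring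
  have hlogt : 2 * ε ^ 2 ≤ t₀ ^ 2 := by
    have hl2 : (0.6931471803 : ℝ) < Real.log 2 := Real.log_two_gt_d9
    nlinarith [sq_nonneg ε]
  have tail : ∀ t : ℝ, t₀ ≤ t → P {a | t < max 0 (⨆ i, Y i a)}
      ≤ ENNReal.ofReal (Real.exp (-(1/(4*ε^2)) * t ^ 2)) := by
    intro t htt
    have ht0 : 0 < t := lt_of_lt_of_le ht₀0 htt
    have ht2 : 2 * ε ^ 2 ≤ t ^ 2 :=
      le_trans hlogt (by nlinarith)
    have hset : {a | t < max 0 (⨆ i, Y i a)} = {a | t < ⨆ i, Y i a} := by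
      ext a
      simp only [Set.mem_setOf_eq, lt_max_iff]
      constructor
      · rintro (h | h)
        · linarith
        · exact h
      · exact fun h => Or.inr h
    have hsub : {a | t < ⨆ i, Y i a} ⊆ ⋃ i, {a | t < Y i a} := by
      intro a ha
      have hbdd : BddAbove (Set.range fun i => Y i a) := Set.Finite.bddAbove (Set.finite_range _)
      obtain ⟨i, hi⟩ := (lt_ciSup_iff hbdd).mp ha
      exact Set.mem_iUnion.mpr ⟨i, hi⟩
    have hbound_i : ∀ i, P {a | t < Y i a}
        ≤ ENNReal.ofReal ((S i i / ε ^ 2) * Real.exp (-t ^ 2 / (2 * ε ^ 2))) := by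
      intro i
      have hpre : {a | t < Y i a} = Y i ⁻¹' Set.Ioi t := rfl
      rw [hpre, ← Measure.map_apply (hYmeas i) measurableSet_Ioi, hmarg i]
      rcases eq_or_lt_of_le (hSnn i) with h0 | hpos
      · have hz : Real.toNNReal (S i i) = 0 := by rw [← h0]; simp
        rw [hz, gaussianReal_zero_var]
        rw [Measure.dirac_apply' _ measurableSet_Ioi]
        simp [Set.indicator, Set.mem_Ioi, not_lt.mpr ht0.le]
      · have hcoe : ((Real.toNNReal (S i i)) : ℝ) = S i i := Real.coe_toNNReal _ (hSnn i)
        have hne : Real.toNNReal (S i i) ≠ 0 :=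
          fun hh => absurd (Real.toNNReal_eq_zero.mp hh) (not_le.mpr hpos)
        refine le_trans (gauss_tail _ hne ht0.le) (ENNReal.ofReal_le_ofReal ?_)
        rw [hcoe]
        exact exp_ratio hε hpos (hSdiag i) ht2
    have hsum : (∑ i, (S i i / ε ^ 2) * Real.exp (-t ^ 2 / (2 * ε ^ 2)))
        ≤ Real.exp (-(1/(4*ε^2)) * t ^ 2) := by
      have hfac : (∑ i, (S i i / ε ^ 2) * Real.exp (-t ^ 2 / (2 * ε ^ 2)))
          = (∑ i, S i i) * (Real.exp (-t ^ 2 / (2 * ε ^ 2)) / ε ^ 2) := by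
        rw [Finset.sum_mul]
        congr 1 with i
        ring
      rw [hfac]
      have hE : Real.exp (-t ^ 2 / (2 * ε ^ 2)) / ε ^ 2 ≤ Real.exp (-(1/(4*ε^2)) * t ^ 2) := by
        have h4 : Real.exp (-(1/(4*ε^2)) * t ^ 2) ≤ ε ^ 2 := by
          have hLε : L = -Real.log ε := by rw [hLdef, one_div, Real.log_inv]
          have ht9 : 9 * ε ^ 2 * L ≤ t ^ 2 := by nlinarith
          have hexp : -(1/(4*ε^2)) * t ^ 2 ≤ Real.log (ε ^ 2) := by
            rw [Real.log_pow]
            rw [neg_mul, neg_le, ← neg_mul]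
            have hlogε : -(2 : ℕ) * Real.log ε = 2 * L := by
              push_cast
              rw [hLε]; ring
            rw [hlogε, show 1/(4*ε^2) * t ^ 2 = t ^ 2 / (4*ε^2) by ring,
              le_div_iff₀ (by positivity)]
            nlinarith
          calc Real.exp (-(1/(4*ε^2)) * t ^ 2) ≤ Real.exp (Real.log (ε ^ 2)) :=
                Real.exp_le_exp.mpr hexp
            _ = ε ^ 2 := Real.exp_log (by positivity)
        have hsplit : Real.exp (-t ^ 2 / (2 * ε ^ 2))
            = Real.exp (-(1/(4*ε^2)) * t ^ 2) * Real.exp (-(1/(4*ε^2)) * t ^ 2) := by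
          rw [← Real.exp_add]
          congr 1
          field_simp
          ring
        rw [hsplit, div_le_iff₀ (by positivity)]
        nlinarith [Real.exp_pos (-(1/(4*ε^2)) * t ^ 2)]
      calc (∑ i, S i i) * (Real.exp (-t ^ 2 / (2 * ε ^ 2)) / ε ^ 2)
          ≤ 1 * (Real.exp (-t ^ 2 / (2 * ε ^ 2)) / ε ^ 2) :=
            mul_le_mul_of_nonneg_right hStr (by positivity)
        _ = Real.exp (-t ^ 2 / (2 * ε ^ 2)) / ε ^ 2 := one_mul _
        _ ≤ _ := hE
    calc P {a | t < max 0 (⨆ i, Y i a)} = P {a | t < ⨆ i, Y i a} := by rw [hset]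
      _ ≤ P (⋃ i, {a | t < Y i a}) := measure_mono hsub
      _ ≤ ∑' i, P {a | t < Y i a} := measure_iUnion_le _
      _ = ∑ i, P {a | t < Y i a} := tsum_fintype _
      _ ≤ ∑ i, ENNReal.ofReal ((S i i / ε ^ 2) * Real.exp (-t ^ 2 / (2 * ε ^ 2))) :=
          Finset.sum_le_sum fun i _ => hbound_i i
      _ = ENNReal.ofReal (∑ i, (S i i / ε ^ 2) * Real.exp (-t ^ 2 / (2 * ε ^ 2))) := by
          rw [ENNReal.ofReal_sum_of_nonneg fun i _ => mul_nonneg (div_nonneg (hSnn i) (sq_nonneg ε)) (Real.exp_nonneg _)]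
      _ ≤ ENNReal.ofReal (Real.exp (-(1/(4*ε^2)) * t ^ 2)) := ENNReal.ofReal_le_ofReal hsum
  have hf_nn : 0 ≤ᵐ[P] fun ω => max 0 (⨆ i, Y i ω) := ae_of_all _ fun ω => le_max_left _ _
  rw [integral_eq_lintegral_of_nonneg_ae hf_nn hint.aestronglyMeasurable]
  rw [lintegral_eq_lintegral_meas_lt P hf_nn hint.aemeasurable]
  apply ENNReal.toReal_le_of_le_ofReal hRHS
  have hsplit : ∫⁻ t in Set.Ioi 0, P {a | t < max 0 (⨆ i, Y i a)}
      = (∫⁻ t in Set.Ioc 0 t₀, P {a | t < max 0 (⨆ i, Y i a)})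
        + ∫⁻ t in Set.Ioi t₀, P {a | t < max 0 (⨆ i, Y i a)} := by
    rw [← lintegral_union measurableSet_Ioi (Set.Ioc_disjoint_Ioi le_rfl),
      Set.Ioc_union_Ioi_eq_Ioi ht₀0.le]
  rw [hsplit]
  have piece1 : (∫⁻ t in Set.Ioc 0 t₀, P {a | t < max 0 (⨆ i, Y i a)})
      ≤ ENNReal.ofReal t₀ := by
    calc (∫⁻ t in Set.Ioc 0 t₀, P {a | t < max 0 (⨆ i, Y i a)})
        ≤ ∫⁻ _ in Set.Ioc 0 t₀, 1 := lintegral_mono fun t => prob_le_one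
      _ = volume (Set.Ioc 0 t₀) := setLIntegral_one _
      _ = ENNReal.ofReal t₀ := by rw [Real.volume_Ioc, sub_zero]
  have piece2 : (∫⁻ t in Set.Ioi t₀, P {a | t < max 0 (⨆ i, Y i a)})
      ≤ ENNReal.ofReal (2 * ε * Real.sqrt π) := by
    calc (∫⁻ t in Set.Ioi t₀, P {a | t < max 0 (⨆ i, Y i a)})
        ≤ ∫⁻ t in Set.Ioi t₀, ENNReal.ofReal (Real.exp (-(1/(4*ε^2)) * t ^ 2)) :=
          setLIntegral_mono (by fun_prop) fun t htmem => tail t (le_of_lt htmem)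
      _ ≤ ∫⁻ t, ENNReal.ofReal (Real.exp (-(1/(4*ε^2)) * t ^ 2)) :=
          setLIntegral_le_lintegral _ _
      _ = ENNReal.ofReal (∫ t, Real.exp (-(1/(4*ε^2)) * t ^ 2)) :=
          (ofReal_integral_eq_lintegral_ofReal
            (integrable_exp_neg_mul_sq (by positivity))
            (ae_of_all _ fun x => Real.exp_nonneg _)).symm
      _ = ENNReal.ofReal (Real.sqrt (π / (1/(4*ε^2)))) := by rw [integral_gaussian]
      _ = ENNReal.ofReal (2 * ε * Real.sqrt π) := by
          congr 1
          rw [show π / (1/(4*ε^2)) = (2*ε)^2 * π by field_simp; ring,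
            Real.sqrt_mul (by positivity), Real.sqrt_sq (by positivity)]
  calc (∫⁻ t in Set.Ioc 0 t₀, P {a | t < max 0 (⨆ i, Y i a)})
        + ∫⁻ t in Set.Ioi t₀, P {a | t < max 0 (⨆ i, Y i a)}
      ≤ ENNReal.ofReal t₀ + ENNReal.ofReal (2 * ε * Real.sqrt π) := add_le_add piece1 piece2
    _ = ENNReal.ofReal (t₀ + 2 * ε * Real.sqrt π) := by
        rw [ENNReal.ofReal_add ht₀0.le (by positivity)]
    _ ≤ ENNReal.ofReal (8 * ε * Real.sqrt L) := by
        apply ENNReal.ofReal_le_ofReal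
        have hπ : 2 * Real.sqrt π ≤ 5 * Real.sqrt L := by
          have e1 : 2 * Real.sqrt π = Real.sqrt (4 * π) := by
            rw [show (4:ℝ) * π = 2^2 * π by ring, Real.sqrt_mul (by norm_num),
              Real.sqrt_sq (by norm_num)]
          have e2 : 5 * Real.sqrt L = Real.sqrt (25 * L) := by
            rw [show (25:ℝ) * L = 5^2 * L by ring, Real.sqrt_mul (by norm_num),
              Real.sqrt_sq (by norm_num)]
          rw [e1, e2]
          apply Real.sqrt_le_sqrt
          have hl2 : (0.6931471803 : ℝ) < Real.log 2 := Real.log_two_gt_d9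
          have hpi315 : π < 3.15 := Real.pi_lt_d2
          nlinarith
        rw [ht₀def]
        nlinarith
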